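/- Let f : ℂ → ℕ be any function and q₀ ∈ ℂ[X] a fixed polynomial. Define Q : ℂ[X] → ℂ[X] by Q(p) = 0 for constant p, and for p(z) = a·∏_{j=1}^N (z − z_j) (N ≥ 1) by Q(p) = a·∑_{k=1}^N q₀^{f(z_k)} · ∏_{j≠k} (X − z_j). Then Q is well defined and satisfies the Leibniz rule Q(p·q) = Q(p)·q + p·Q(q) for all p, q ∈ ℂ[X]. -/

import Mathlib

open Polynomial

noncomputable def PmAux (s : Multiset ℂ) : Polynomial ℂ :=
  (s.map (fun w => X - C w)).prod

noncomputable def DmAux (f : ℂ → ℕ) (q₀ : Polynomial ℂ) (s : Multiset ℂ) : Polynomial ℂ :=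
  (s.map (fun a => q₀ ^ f a * PmAux (s.erase a))).sum

lemma PmAux_add (s t : Multiset ℂ) : PmAux (s + t) = PmAux s * PmAux t := by
  simp [PmAux, Multiset.prod_add]

lemma PmAux_cons (a : ℂ) (s : Multiset ℂ) : PmAux (a ::ₘ s) = (X - C a) * PmAux s := by
  simp [PmAux]

lemma erase_cons_of_mem {α} [DecidableEq α] (a : α) {b : α} {s : Multiset α} (hb : b ∈ s) :
    (a ::ₘ s).erase b = a ::ₘ s.erase b := by
  by_cases h : b = a
  · subst h
    rw [Multiset.erase_cons_head, Multiset.cons_erase hb]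
  · rw [Multiset.erase_cons_tail_of_mem hb]

lemma DmAux_cons (f : ℂ → ℕ) (q₀ : Polynomial ℂ) (a : ℂ) (s : Multiset ℂ) :
    DmAux f q₀ (a ::ₘ s) = q₀ ^ f a * PmAux s + (X - C a) * DmAux f q₀ s := by
  unfold DmAux
  rw [Multiset.map_cons, Multiset.sum_cons, Multiset.erase_cons_head]
  congr 1
  rw [Multiset.map_congr rfl (fun b hb => by
    rw [erase_cons_of_mem a hb, PmAux_cons, mul_left_comm])]
  exact Multiset.sum_map_mul_left

lemma DmAux_add (f : ℂ → ℕ) (q₀ : Polynomial ℂ) (s t : Multiset ℂ) :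
    DmAux f q₀ (s + t) = DmAux f q₀ s * PmAux t + PmAux s * DmAux f q₀ t := by
  induction s using Multiset.induction_on with
  | empty => simp [DmAux, PmAux]
  | cons a s ih =>
    rw [Multiset.cons_add, DmAux_cons, DmAux_cons, PmAux_add, PmAux_cons, ih]
    ring

lemma DmAux_finset (f : ℂ → ℕ) (q₀ : Polynomial ℂ) {ι : Type*} [DecidableEq ι]
    (s : Finset ι) (z : ι → ℂ) :
    DmAux f q₀ (s.val.map z) =
      ∑ k ∈ s, q₀ ^ f (z k) * ∏ j ∈ s.erase k, (X - C (z j)) := by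
  induction s using Finset.induction_on with
  | empty => simp [DmAux]
  | insert a s ha ih =>
    rw [Finset.insert_val_of_notMem ha, Multiset.map_cons, DmAux_cons, ih,
      Finset.sum_insert ha, Finset.erase_insert ha]
    congr 1
    · congr 1
      rw [PmAux, Multiset.map_map]
      rfl
    · rw [Finset.mul_sum, Finset.sum_congr rfl]
      intro k hk
      rw [Finset.erase_insert_of_ne (by rintro rfl; exact ha hk),
        Finset.prod_insert (fun h => ha (Finset.mem_of_mem_erase h))]
      ring

lemma eq_C_leadingCoeff_mul (p : Polynomial ℂ) :
    C p.leadingCoeff * PmAux p.roots = p := by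
  rw [PmAux]
  exact C_leadingCoeff_mul_prod_multiset_X_sub_C
    ((splits_iff_card_roots).mp (IsAlgClosed.splits p))

open Polynomial in
theorem exists_root_substitution_leibniz (f : ℂ → ℕ) (q₀ : Polynomial ℂ) :
    ∃ Q : Polynomial ℂ → Polynomial ℂ,
      (∀ b : ℂ, Q (C b) = 0) ∧
      (∀ (N : ℕ), 1 ≤ N → ∀ (a : ℂ) (z : Fin N → ℂ),
        Q (C a * ∏ j, (X - C (z j))) =
          C a * ∑ k, q₀ ^ f (z k) * ∏ j ∈ Finset.univ.erase k, (X - C (z j))) ∧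
      (∀ p q : Polynomial ℂ, Q (p * q) = Q p * q + p * Q q) := by
  refine ⟨fun p => C p.leadingCoeff * DmAux f q₀ p.roots, fun b => ?_, ?_, ?_⟩
  · simp [DmAux]
  · intro N hN a z
    dsimp only
    by_cases ha : a = 0
    · simp [ha, DmAux]
    · have hprod : ∏ j, (X - C (z j)) = PmAux (Finset.univ.val.map z) := by
        rw [PmAux, Multiset.map_map]; rfl
      have hroots : (C a * ∏ j, (X - C (z j))).roots = Finset.univ.val.map z := by
        rw [roots_C_mul _ ha, hprod, PmAux, roots_multiset_prod_X_sub_C]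
      have hlc : (C a * ∏ j, (X - C (z j))).leadingCoeff = a := by
        rw [leadingCoeff_mul, leadingCoeff_C,
          Monic.leadingCoeff (monic_prod_of_monic _ _ (fun j _ => monic_X_sub_C (z j))),
          mul_one]
      rw [hroots, hlc, DmAux_finset]
  · intro p q
    dsimp only
    by_cases hp : p = 0
    · simp [hp, DmAux]
    by_cases hq : q = 0
    · simp [hq, DmAux]
    rw [roots_mul (mul_ne_zero hp hq), leadingCoeff_mul, DmAux_add, C_mul]
    have h1 : C (p * q).leadingCoeff = C p.leadingCoeff * C q.leadingCoeff := by
      rw [leadingCoeff_mul, C_mul]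
    calc C p.leadingCoeff * C q.leadingCoeff *
          (DmAux f q₀ p.roots * PmAux q.roots + PmAux p.roots * DmAux f q₀ q.roots)
        = C p.leadingCoeff * DmAux f q₀ p.roots * (C q.leadingCoeff * PmAux q.roots) +
          (C p.leadingCoeff * PmAux p.roots) * (C q.leadingCoeff * DmAux f q₀ q.roots) := by
          ring
      _ = _ := by rw [eq_C_leadingCoeff_mul p, eq_C_leadingCoeff_mul q]
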